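/- For every n ≥ 2, every q ∈ ℂ with q ≠ 0, and all indices 1 ≤ i < j ≤ n, the operators on V (the span of basis vectors indexed by involutions in ISₙ) satisfy T_i P_j = P_j T_i = q P_j in End_ℂ(V). -/

import Mathlib

open Equiv

/-- The symmetric inverse semigroup `ISₙ`: partial injective maps of `{0, …, n−1}`
(modelled as partial equivalences `Fin n ≃. Fin n`), under composition of partial
maps: `(x * y)(a) = x(y(a))`. -/
abbrev ISn (n : ℕ) : Type := PEquiv (Fin n) (Fin n)

noncomputable instance ISnMonoid (n : ℕ) : Monoid (ISn n) where
  one := PEquiv.refl (Fin n)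
  mul x y := y.trans x
  mul_assoc x y z := (PEquiv.trans_assoc z y x).symm
  one_mul x := PEquiv.trans_refl x
  mul_one x := PEquiv.refl_trans x

@[simp] theorem ISn.mul_def {n : ℕ} (x y : ISn n) : x * y = y.trans x := rfl
@[simp] theorem ISn.one_def {n : ℕ} : (1 : ISn n) = PEquiv.refl (Fin n) := rfl

/-- Involutions in `ISₙ`: elements mapping their domain bijectively to itself with
`w(w(a)) = a` for all `a` in the domain; equivalently, `w.symm = w`. -/
abbrev ISInv (n : ℕ) : Type := {w : ISn n // w.symm = w}

/-- `V`: the complex vector space with basis `{I_w : w an involution in ISₙ}`. -/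
abbrev VIS (n : ℕ) : Type := ISInv n →₀ ℂ

/-- Conjugation `x w x⁻¹` of an involution `w ∈ ISₙ` by an element `x ∈ ISₙ`
(as a partial map, `a ↦ x(w(x⁻¹(a)))`; when `dom(w) ⊆ dom(x)` this is the involution
with domain `x(dom(w))` sending `x(a) ↦ x(w(a))` for `a ∈ dom(w)`). -/
def conjIS {n : ℕ} (x : ISn n) (w : ISInv n) : ISInv n :=
  ⟨(x.symm.trans w.1).trans x, by
    rw [PEquiv.symm_trans_rev, PEquiv.symm_trans_rev, PEquiv.symm_symm, w.2,
      PEquiv.trans_assoc]⟩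

/-- Conjugation `π w π⁻¹` of an involution `w ∈ ISₙ` by a permutation `π ∈ Sₙ`:
the involution with domain `π(dom(w))` sending `π(a) ↦ π(w(a))` for `a ∈ dom(w)`. -/
def conjPermIS {n : ℕ} (π : Equiv.Perm (Fin n)) (w : ISInv n) : ISInv n :=
  conjIS π.toPEquiv w

/-- The operator `T_i` on `V`.  Indices are 0-based: the parameter `i` (with
`i + 1 < n`) corresponds to the pair of points `i, i+1` of `{0, …, n−1}` (that is,
to the 1-based index `i+1` of the paper), and `s_i` is the transposition swapping
them.  On a basis vector `I_w`:
if `i, i+1 ∈ dom(w)` then `T_i I_w` is `q I_w` if `i, i+1 ∉ supp(w)`; `−I_w` if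
`i, i+1 ∈ supp(w)`; `I_{s_i w s_i}` if `i ∈ supp(w)`, `i+1 ∉ supp(w)`;
`q I_{s_i w s_i} + (q−1) I_w` if `i ∉ supp(w)`, `i+1 ∈ supp(w)`.
If `i, i+1 ∉ dom(w)` then `T_i I_w = q I_w`.  If `i ∈ dom(w)`, `i+1 ∉ dom(w)` then
`T_i I_w = I_{s_i w s_i}`.  If `i ∉ dom(w)`, `i+1 ∈ dom(w)` then
`T_i I_w = q I_{s_i w s_i} + (q−1) I_w`. -/
noncomputable def TIS (n : ℕ) (q : ℂ) (i : ℕ) (hi : i + 1 < n) : VIS n →ₗ[ℂ] VIS n :=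
  Finsupp.lift (VIS n) ℂ (ISInv n) (fun w =>
    letI a : Fin n := ⟨i, Nat.lt_of_succ_lt hi⟩
    letI b : Fin n := ⟨i + 1, hi⟩
    letI s : Equiv.Perm (Fin n) := Equiv.swap a b
    if (w.1 a).isSome then
      if (w.1 b).isSome then
        -- both `i` and `i+1` lie in `dom(w)`
        if w.1 a = some a then
          if w.1 b = some b then q • Finsupp.single w (1 : ℂ)
          else q • Finsupp.single (conjPermIS s w) (1 : ℂ) +
            (q - 1) • Finsupp.single w (1 : ℂ)
        else
          if w.1 b = some b then Finsupp.single (conjPermIS s w) (1 : ℂ)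
          else - Finsupp.single w (1 : ℂ)
      else Finsupp.single (conjPermIS s w) (1 : ℂ)
    else
      if (w.1 b).isSome then
        q • Finsupp.single (conjPermIS s w) (1 : ℂ) + (q - 1) • Finsupp.single w (1 : ℂ)
      else q • Finsupp.single w (1 : ℂ))

/-- The operator `P_i` on `V`.  Indices are 0-based: the parameter `i` (with `i < n`)
corresponds to the 1-based index `i+1` of the paper, so that the paper's condition
`dom(w) ⊆ {i+1, …, n}` becomes: every `a ∈ dom(w)` satisfies `i < a`.
On a basis vector: `P_i I_w = I_w` if `dom(w) ⊆ {i+1, …, n}`, and `P_i I_w = 0`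
otherwise. -/
noncomputable def PIS (n : ℕ) (i : ℕ) : VIS n →ₗ[ℂ] VIS n :=
  Finsupp.lift (VIS n) ℂ (ISInv n) (fun w =>
    if ∀ a : Fin n, (w.1 a).isSome → i < (a : ℕ) then Finsupp.single w (1 : ℂ) else 0)

/-- The linear map `C_π : V → V` with `C_π(I_w) = I_{π w π⁻¹}`. -/
noncomputable def CIS (n : ℕ) (π : Equiv.Perm (Fin n)) : VIS n →ₗ[ℂ] VIS n :=
  Finsupp.lift (VIS n) ℂ (ISInv n) (fun w => Finsupp.single (conjPermIS π w) (1 : ℂ))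

lemma conjPermIS_isSome {n : ℕ} (π : Equiv.Perm (Fin n)) (w : ISInv n) (x : Fin n) :
    ((conjPermIS π w).1 x).isSome = (w.1 (π.symm x)).isSome := by
  show (((π.toPEquiv.symm.trans w.1).trans π.toPEquiv) x).isSome = _
  show ((((π.toPEquiv.symm x).bind w.1)).bind π.toPEquiv).isSome = _
  rw [← Equiv.toPEquiv_symm, Equiv.toPEquiv_apply, Option.bind_some]
  cases h : w.1 (π.symm x) <;> simp [h, Equiv.toPEquiv_apply]

lemma TIS_single {n : ℕ} (q : ℂ) (i : ℕ) (hi : i + 1 < n) (w : ISInv n) (c : ℂ) :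
    TIS n q i hi (Finsupp.single w c) = c •
      (letI a : Fin n := ⟨i, Nat.lt_of_succ_lt hi⟩
       letI b : Fin n := ⟨i + 1, hi⟩
       letI s : Equiv.Perm (Fin n) := Equiv.swap a b
       if (w.1 a).isSome then
        if (w.1 b).isSome then
          if w.1 a = some a then
            if w.1 b = some b then q • Finsupp.single w (1 : ℂ)
            else q • Finsupp.single (conjPermIS s w) (1 : ℂ) +
              (q - 1) • Finsupp.single w (1 : ℂ)
          else
            if w.1 b = some b then Finsupp.single (conjPermIS s w) (1 : ℂ)
            else - Finsupp.single w (1 : ℂ)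
        else Finsupp.single (conjPermIS s w) (1 : ℂ)
      else
        if (w.1 b).isSome then
          q • Finsupp.single (conjPermIS s w) (1 : ℂ) + (q - 1) • Finsupp.single w (1 : ℂ)
        else q • Finsupp.single w (1 : ℂ)) := by
  simp [TIS]

lemma PIS_single {n : ℕ} (j : ℕ) (w : ISInv n) (c : ℂ) :
    PIS n j (Finsupp.single w c) = c •
      (if ∀ a : Fin n, (w.1 a).isSome → j < (a : ℕ) then Finsupp.single w (1 : ℂ) else 0) := by
  simp [PIS]
/-- `T_i P_j = P_j T_i = q P_j` for `i < j` (0-based indices: the paper's 1-based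
condition `1 ≤ i < j ≤ n` reads `i < j`, `i + 1 < n`, `j < n`). -/

theorem TIS_PIS_high (n : ℕ) (hn : 2 ≤ n) (q : ℂ) (hq : q ≠ 0) (i j : ℕ)
    (hi : i + 1 < n) (hj : j < n) (hij : i < j) :
    (TIS n q i hi : Module.End ℂ (VIS n)) * PIS n j = q • PIS n j ∧
      (PIS n j : Module.End ℂ (VIS n)) * TIS n q i hi = q • PIS n j := by
  set a : Fin n := ⟨i, Nat.lt_of_succ_lt hi⟩ with ha
  set b : Fin n := ⟨i + 1, hi⟩ with hb
  set s : Equiv.Perm (Fin n) := Equiv.swap a b with hs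
  have hji : ¬ j < (a : ℕ) := by simp only [ha]; omega
  have hji' : ¬ j < (b : ℕ) := by simp only [hb]; omega
  constructor
  · apply Finsupp.lhom_ext
    intro w c
    rw [Module.End.mul_apply, LinearMap.smul_apply, PIS_single]
    by_cases hC : ∀ x : Fin n, (w.1 x).isSome → j < (x : ℕ)
    · rw [if_pos hC, smul_comm, map_smul, TIS_single]
      have hna : (w.1 a) = none := by
        cases h : (w.1 a) with
        | none => rfl
        | some y => exact absurd (hC a (by simp [h])) hji
      have hnb : (w.1 b) = none := by
        cases h : (w.1 b) with
        | none => rfl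
        | some y => exact absurd (hC b (by simp [h])) hji'
      simp only [ha, hb] at hna hnb
      simp [hna, hnb]
    · simp [if_neg hC]
  · apply Finsupp.lhom_ext
    intro w c
    rw [Module.End.mul_apply, LinearMap.smul_apply, TIS_single, map_smul, PIS_single]
    have hconj : ∀ x : Fin n, ((conjPermIS s w).1 x).isSome = (w.1 (s x)).isSome := by
      intro x
      rw [conjPermIS_isSome, hs, Equiv.symm_swap]
    by_cases hA : (w.1 a).isSome <;> by_cases hB : (w.1 b).isSome
    rotate_right 1
    · -- neither a nor b in the domain
      have hna : (w.1 a).isSome = false := by simpa using hA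
      have hnb : (w.1 b).isSome = false := by simpa using hB
      simp only [ha, hb] at hna hnb
      simp only [hna, hnb, Bool.false_eq_true, if_false]
      rw [map_smul, PIS_single]
      split_ifs <;> simp [smul_smul, mul_comm]
    all_goals (
      -- at least one of a, b in the domain: everything vanishes
      have hCw : ¬ ∀ x : Fin n, (w.1 x).isSome → j < (x : ℕ) := by
        intro h
        first
        | exact hji (h a hA)
        | exact hji' (h b hB)
      have hCc : ¬ ∀ x : Fin n, ((conjPermIS s w).1 x).isSome → j < (x : ℕ) := by
        intro h
        first
        | exact hji' (h b (by rw [hconj b]; simpa [hs, Equiv.swap_apply_right] using hA))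
        | exact hji (h a (by rw [hconj a]; simpa [hs, Equiv.swap_apply_left] using hB))
      have h1 : ∀ r : ℂ, PIS n j (Finsupp.single w r) = 0 := by
        intro r; rw [PIS_single, if_neg hCw]; simp
      have h2 : ∀ r : ℂ, PIS n j (Finsupp.single (conjPermIS s w) r) = 0 := by
        intro r; rw [PIS_single, if_neg hCc]; simp
      rw [if_neg hCw]
      simp only [hs, ha, hb] at h2
      split_ifs <;>
        simp [map_add, map_smul, map_neg, h1, h2])
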